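/- arXiv:0812.3485 — 2 statements merged into one kernel-verified Lean document; each statement's English description precedes it below -/
import Mathlib

section
/- Let μ be a boundedly finite Borel measure on E = [0,∞)² ∖ {(0,0)} that is homogeneous of degree −1 and has standardized marginals, let ‖·‖ be a norm on ℝ² with ‖(1,0)‖ = 1 = ‖(0,1)‖, and let Φ be the spectral measure of μ with respect to ‖·‖. Then Φ satisfies the moment constraints ∫_{[0,π/2]} sinθ/‖(sinθ,cosθ)‖ Φ(dθ) = 1 = ∫_{[0,π/2]} cosθ/‖(sinθ,cosθ)‖ Φ(dθ). -/
open MeasureTheory Set Real Filter Topology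
open scoped ENNReal Pointwise

noncomputable section

/-- The cone `E = [0,∞)² \ {(0,0)}` as a subset of `ℝ²`. -/
def Econe : Set (ℝ × ℝ) := (Ici 0 ×ˢ Ici 0) \ {((0 : ℝ), (0 : ℝ))}

/-- The angular coordinate `θ(z) = arctan (z₁ / z₂)`, with `θ(z) = π/2` when `z₂ = 0`. -/
def ang (z : ℝ × ℝ) : ℝ := if z.2 = 0 then π / 2 else Real.arctan (z.1 / z.2)

/-- The radial measure `dr/r²` on `(0,∞)`. -/
def rhoM : Measure ℝ :=
  (volume.restrict (Ioi 0)).withDensity fun r => ENNReal.ofReal (r ^ (-2 : ℝ))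

lemma rhoM_apply {s : Set ℝ} (hs : MeasurableSet s) :
    rhoM s = ∫⁻ r in s ∩ Ioi 0, ENNReal.ofReal (r ^ (-2 : ℝ)) := by
  rw [rhoM, withDensity_apply _ hs, Measure.restrict_restrict hs]

lemma rhoM_Iic : rhoM (Iic 0) = 0 := by
  rw [rhoM_apply measurableSet_Iic]
  have : Iic (0:ℝ) ∩ Ioi 0 = ∅ := by
    ext x; simp only [mem_inter_iff, mem_Iic, mem_Ioi, mem_empty_iff_false, iff_false]
    rintro ⟨h1, h2⟩; linarith
  rw [this]; simp

lemma rhoM_Ioi {t : ℝ} (ht : 0 < t) : rhoM (Ioi t) = ENNReal.ofReal t⁻¹ := by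
  rw [rhoM_apply measurableSet_Ioi]
  have h1 : Ioi t ∩ Ioi (0:ℝ) = Ioi t := by
    rw [inter_eq_left]; exact Ioi_subset_Ioi ht.le
  rw [h1]
  have hint : IntegrableOn (fun r : ℝ => r ^ (-2 : ℝ)) (Ioi t) :=
    integrableOn_Ioi_rpow_of_lt (by norm_num) ht
  have hnn : 0 ≤ᵐ[volume.restrict (Ioi t)] fun r : ℝ => r ^ (-2 : ℝ) := by
    refine (ae_restrict_iff' measurableSet_Ioi).2 (Filter.Eventually.of_forall fun x hx => ?_)
    exact Real.rpow_nonneg (le_of_lt (ht.trans hx)) _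
  rw [← ofReal_integral_eq_lintegral_ofReal hint hnn]
  congr 1
  rw [integral_Ioi_rpow_of_lt (by norm_num) ht]
  norm_num
  rw [Real.rpow_neg_one]

instance rhoM_sigmaFinite : SigmaFinite rhoM := by
  refine ⟨⟨⟨fun n => Iic 0 ∪ Ioi (1/(n+1)), fun _ => trivial, fun n => ?_, ?_⟩⟩⟩
  · refine lt_of_le_of_lt (measure_union_le _ _) ?_
    rw [rhoM_Iic, rhoM_Ioi (by positivity)]
    simp [ENNReal.ofReal_lt_top]
  · ext x
    simp only [mem_iUnion, mem_union, mem_Iic, mem_Ioi, mem_univ, iff_true]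
    rcases le_or_gt x 0 with h | h
    · exact ⟨0, Or.inl h⟩
    · obtain ⟨n, hn⟩ := exists_nat_one_div_lt h
      exact ⟨n, Or.inr hn⟩

lemma aux_iSup {t : ℝ} (ht : 0 < t) {c : ℝ≥0∞} (hc : c ≠ ⊤) :
    (⨆ n : ℕ, ENNReal.ofReal (t * (1 + 1/(n+1)))⁻¹ * c) = ENNReal.ofReal t⁻¹ * c := by
  apply le_antisymm
  · refine iSup_le fun n => mul_le_mul_left (ENNReal.ofReal_le_ofReal ?_) c
    have h1 : (0:ℝ) < 1/((n:ℝ)+1) := by positivity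
    have h2 : t ≤ t * (1 + 1/((n:ℝ)+1)) := by nlinarith
    exact inv_anti₀ ht h2
  · have htend : Tendsto (fun n : ℕ => ENNReal.ofReal (t * (1 + 1/(n+1)))⁻¹ * c) atTop
        (𝓝 (ENNReal.ofReal t⁻¹ * c)) := by
      refine ENNReal.Tendsto.mul_const ?_ (Or.inr hc)
      refine ENNReal.tendsto_ofReal ?_
      have h : Tendsto (fun n : ℕ => t * (1 + 1/((n:ℝ)+1))) atTop (𝓝 (t * (1 + 0))) :=
        tendsto_const_nhds.mul (tendsto_const_nhds.add tendsto_one_div_add_atTop_nhds_zero_nat)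
      have := h.inv₀ (by simpa using ht.ne')
      simpa using this
    exact le_of_tendsto htend (Filter.Eventually.of_forall fun n => le_iSup (fun m : ℕ => ENNReal.ofReal (t * (1 + 1/(m+1)))⁻¹ * c) n)

lemma aux_measure_gt {α : Type*} [MeasurableSpace α] (μ : Measure α) (P : α → Prop)
    (f : α → ℝ) {c : ℝ≥0∞} (hc : c ≠ ⊤)
    (hgen : ∀ s : ℝ, 0 < s → μ {z | (P z) ∧ s ≤ f z} = ENNReal.ofReal s⁻¹ * c)
    {t : ℝ} (ht : 0 < t) :
    μ {z | (P z) ∧ t < f z} = ENNReal.ofReal t⁻¹ * c := by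
  have hU : {z | (P z) ∧ t < f z} = ⋃ n : ℕ, {z | (P z) ∧ t * (1 + 1/(n+1)) ≤ f z} := by
    ext z
    simp only [mem_setOf_eq, mem_iUnion]
    constructor
    · rintro ⟨hP, hlt⟩
      obtain ⟨n, hn⟩ := exists_nat_one_div_lt (div_pos (sub_pos.2 hlt) ht)
      have hn' : 1/((n:ℝ)+1) * t < f z - t := (lt_div_iff₀ ht).1 hn
      exact ⟨n, hP, by nlinarith⟩
    · rintro ⟨n, hP, hle⟩
      have h1 : (0:ℝ) < 1/((n:ℝ)+1) := by positivity
      exact ⟨hP, lt_of_lt_of_le (by nlinarith) hle⟩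
  have hmono : Monotone fun n : ℕ => {z | (P z) ∧ t * (1 + 1/(n+1)) ≤ f z} := by
    intro m n hmn z hz
    obtain ⟨hP, hle⟩ := hz
    have h1 : ((m:ℝ)+1) ≤ (n:ℝ)+1 := by exact_mod_cast Nat.succ_le_succ hmn
    have h2 : 1/((n:ℝ)+1) ≤ 1/((m:ℝ)+1) := by
      apply one_div_le_one_div_of_le (by positivity) h1
    exact ⟨hP, le_trans (by nlinarith) hle⟩
  rw [hU, hmono.directed_le.measure_iUnion]
  have heach : ∀ n : ℕ, μ {z | (P z) ∧ t * (1 + 1/(n+1)) ≤ f z}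
      = ENNReal.ofReal (t * (1 + 1/(n+1)))⁻¹ * c := by
    intro n
    have h1 : (0:ℝ) < 1/((n:ℝ)+1) := by positivity
    exact hgen _ (by nlinarith)
  simp_rw [heach]
  exact aux_iSup ht hc

lemma meas_ext_pos (m₁ m₂ : Measure ℝ) (h1 : m₁ (Iic 0) = 0) (h2 : m₂ (Iic 0) = 0)
    (h : ∀ ε : ℝ, 0 < ε → m₁.restrict (Ioi ε) = m₂.restrict (Ioi ε)) : m₁ = m₂ := by
  ext s hs
  have key : ∀ m : Measure ℝ, m (Iic 0) = 0 →
      m s = ⨆ n : ℕ, m.restrict (Ioi (1/(n+1))) s := by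
    intro m hm
    have hsplit : m s = m (s ∩ Ioi 0) := by
      have h0 := measure_inter_add_diff (μ := m) s (measurableSet_Ioi (a := (0:ℝ)))
      have hdiff : m (s \ Ioi 0) = 0 := by
        refine measure_mono_null (fun x hx => ?_) hm
        simpa using not_lt.1 hx.2
      rw [← h0, hdiff, add_zero]
    rw [hsplit]
    have hU : s ∩ Ioi 0 = ⋃ n : ℕ, s ∩ Ioi (1/(n+1)) := by
      ext x
      simp only [mem_inter_iff, mem_Ioi, mem_iUnion]
      constructor
      · rintro ⟨hx, h0⟩
        obtain ⟨n, hn⟩ := exists_nat_one_div_lt h0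
        exact ⟨n, hx, hn⟩
      · rintro ⟨n, hx, hn⟩
        exact ⟨hx, lt_trans (by positivity) hn⟩
    have hmono : Monotone fun n : ℕ => s ∩ Ioi (1/((n:ℝ)+1)) := by
      intro a b hab x hx
      refine ⟨hx.1, ?_⟩
      have h1 : ((a:ℝ)+1) ≤ (b:ℝ)+1 := by exact_mod_cast Nat.succ_le_succ hab
      have h2 : 1/((b:ℝ)+1) ≤ 1/((a:ℝ)+1) := one_div_le_one_div_of_le (by positivity) h1
      exact lt_of_le_of_lt h2 hx.2
    rw [hU, hmono.directed_le.measure_iUnion]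
    refine iSup_congr fun n => ?_
    rw [Measure.restrict_apply hs]
  rw [key m₁ h1, key m₂ h2]
  exact iSup_congr fun n => by rw [h (1/(n+1)) (by positivity)]

lemma cone_measurable : MeasurableSet Econe :=
  ((measurableSet_Ici.prod measurableSet_Ici).diff (measurableSet_singleton _))

lemma cone_smul {c : ℝ} (hc : 0 < c) {z : ℝ × ℝ} (hz : z ∈ Econe) : c • z ∈ Econe := by
  obtain ⟨⟨h1, h2⟩, h3⟩ := hz
  refine ⟨⟨?_, ?_⟩, ?_⟩
  · exact mul_nonneg hc.le h1
  · exact mul_nonneg hc.le h2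
  · simp only [mem_singleton_iff] at h3 ⊢
    intro hz1
    apply h3
    rw [Prod.ext_iff] at hz1 ⊢
    obtain ⟨ha, hb⟩ := hz1
    simp only [Prod.smul_fst, Prod.smul_snd, smul_eq_mul] at ha hb
    simp only []
    constructor
    · exact ((mul_eq_zero.1 ha).resolve_left hc.ne')
    · exact ((mul_eq_zero.1 hb).resolve_left hc.ne')

lemma key_lemma (μ : Measure (ℝ × ℝ)) (hμE : μ Econeᶜ = 0)
    (hhom : ∀ B : Set (ℝ × ℝ), B ⊆ Econe → MeasurableSet B → ∀ c > (0 : ℝ),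
      μ (c • B) = ENNReal.ofReal c⁻¹ * μ B)
    (Nn : ℝ × ℝ → ℝ) (hNc : Continuous Nn)
    (hNpos : ∀ z ∈ Econe, 0 < Nn z)
    (hNs : ∀ (c : ℝ) (z), Nn (c • z) = |c| * Nn z)
    (hfin : μ {z | z ∈ Econe ∧ 1 ≤ Nn z} ≠ ⊤)
    (k : ℝ × ℝ → ℝ) (hk : Measurable k)
    (hk0 : ∀ c > (0 : ℝ), ∀ z, k (c • z) = k z) :
    ∫⁻ z in {z | z ∈ Econe ∧ 1 ≤ Nn z}, ENNReal.ofReal (k z) ∂μ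
      = μ {z | 1 < Nn z * k z} := by
  have hconeM := cone_measurable
  have hcap : ∀ s : Set (ℝ × ℝ), μ (s ∩ Econe) = μ s := by
    intro s
    refine le_antisymm (measure_mono inter_subset_left) ?_
    calc μ s ≤ μ (s ∩ Econe) + μ (s \ Econe) := measure_le_inter_add_diff μ s Econe
    _ ≤ μ (s ∩ Econe) + μ Econeᶜ := by
        gcongr; exact fun z hz => hz.2
    _ = μ (s ∩ Econe) := by rw [hμE, add_zero]
  set A := {z | z ∈ Econe ∧ 1 ≤ Nn z} with hA
  have hAm : MeasurableSet A := by
    have : A = Econe ∩ Nn ⁻¹' (Ici 1) := rfl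
    rw [this]
    exact hconeM.inter (hNc.measurable measurableSet_Ici)
  set Φk := Measure.map k (μ.restrict A) with hΦk
  have hΦk_apply : ∀ B : Set ℝ, MeasurableSet B →
      Φk B = μ {z | (z ∈ Econe ∧ k z ∈ B) ∧ 1 ≤ Nn z} := by
    intro B hB
    rw [hΦk, Measure.map_apply hk hB, Measure.restrict_apply (hk hB)]
    congr 1
    ext z
    simp only [mem_inter_iff, mem_preimage, mem_setOf_eq, hA]
    tauto
  haveI hΦk_fin : IsFiniteMeasure Φk := by
    constructor
    rw [hΦk, Measure.map_apply hk MeasurableSet.univ, preimage_univ,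
      Measure.restrict_apply_univ]
    exact lt_top_iff_ne_top.2 hfin
  -- scaling identity
  have S1 : ∀ B : Set ℝ, MeasurableSet B → ∀ s : ℝ, 0 < s →
      μ {z | (z ∈ Econe ∧ k z ∈ B) ∧ s ≤ Nn z} = ENNReal.ofReal s⁻¹ * Φk B := by
    intro B hB s hs
    have hB0m : MeasurableSet {z | (z ∈ Econe ∧ k z ∈ B) ∧ 1 ≤ Nn z} := by
      have : {z | (z ∈ Econe ∧ k z ∈ B) ∧ 1 ≤ Nn z}
          = (Econe ∩ k ⁻¹' B) ∩ Nn ⁻¹' (Ici 1) := rfl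
      rw [this]
      exact (hconeM.inter (hk hB)).inter (hNc.measurable measurableSet_Ici)
    have hsub : {z | (z ∈ Econe ∧ k z ∈ B) ∧ 1 ≤ Nn z} ⊆ Econe := fun z h => h.1.1
    have hset : s • {z | (z ∈ Econe ∧ k z ∈ B) ∧ 1 ≤ Nn z}
        = {z | (z ∈ Econe ∧ k z ∈ B) ∧ s ≤ Nn z} := by
      ext z
      rw [Set.mem_smul_set_iff_inv_smul_mem₀ hs.ne']
      simp only [mem_setOf_eq]
      have hNz : Nn (s⁻¹ • z) = s⁻¹ * Nn z := by
        rw [hNs, abs_of_pos (inv_pos.2 hs)]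
      have hkz : k (s⁻¹ • z) = k z := hk0 s⁻¹ (inv_pos.2 hs) z
      constructor
      · rintro ⟨⟨hc, hkB⟩, hN⟩
        have hzc : z ∈ Econe := by
          have h := cone_smul hs hc
          rwa [smul_inv_smul₀ hs.ne'] at h
        rw [hNz] at hN
        rw [hkz] at hkB
        refine ⟨⟨hzc, hkB⟩, ?_⟩
        nlinarith [inv_pos.2 hs, mul_inv_cancel₀ hs.ne']
      · rintro ⟨⟨hc, hkB⟩, hN⟩
        refine ⟨⟨cone_smul (inv_pos.2 hs) hc, by rw [hkz]; exact hkB⟩, ?_⟩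
        rw [hNz]
        nlinarith [inv_pos.2 hs, mul_inv_cancel₀ hs.ne', mul_le_mul_of_nonneg_left hN (inv_pos.2 hs).le]
    rw [← hset, hhom _ hsub hB0m s hs, hΦk_apply B hB]
  -- section measures
  have hsec : ∀ B : Set ℝ, MeasurableSet B →
      Measure.map Nn (μ.restrict {z | z ∈ Econe ∧ k z ∈ B}) = Φk B • rhoM := by
    intro B hB
    have hCm : MeasurableSet {z | z ∈ Econe ∧ k z ∈ B} := by
      have : {z | z ∈ Econe ∧ k z ∈ B} = Econe ∩ k ⁻¹' B := rfl
      rw [this]; exact hconeM.inter (hk hB)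
    set m₁ := Measure.map Nn (μ.restrict {z | z ∈ Econe ∧ k z ∈ B}) with hm₁def
    have hm₁ : ∀ s : Set ℝ, MeasurableSet s →
        m₁ s = μ {z | (z ∈ Econe ∧ k z ∈ B) ∧ Nn z ∈ s} := by
      intro s hsm
      rw [hm₁def, Measure.map_apply hNc.measurable hsm,
        Measure.restrict_apply (hNc.measurable hsm)]
      congr 1
      ext z
      simp only [mem_inter_iff, mem_preimage, mem_setOf_eq]
      tauto
    have hval : ∀ t : ℝ, 0 < t → m₁ (Ioi t) = ENNReal.ofReal t⁻¹ * Φk B := by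
      intro t ht
      rw [hm₁ (Ioi t) measurableSet_Ioi]
      exact aux_measure_gt μ (fun z => z ∈ Econe ∧ k z ∈ B) Nn (measure_ne_top Φk B)
        (S1 B hB) ht
    refine meas_ext_pos _ _ ?_ ?_ ?_
    · rw [hm₁ (Iic 0) measurableSet_Iic]
      refine measure_mono_null (fun z hz => absurd hz.2 ?_) (measure_empty (μ := μ))
      simp only [mem_Iic]
      exact not_le.2 (hNpos z hz.1.1)
    · rw [Measure.smul_apply, smul_eq_mul, rhoM_Iic, mul_zero]
    · intro ε hε
      haveI : IsFiniteMeasure (m₁.restrict (Ioi ε)) := by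
        constructor
        rw [Measure.restrict_apply_univ, hval ε hε]
        exact ENNReal.mul_lt_top ENNReal.ofReal_lt_top (measure_lt_top Φk B)
      refine ext_of_generate_finite (range Ioi)
        (BorelSpace.measurable_eq.trans (borel_eq_generateFrom_Ioi ℝ)) isPiSystem_Ioi ?_ ?_
      · rintro s ⟨a, rfl⟩
        rw [Measure.restrict_apply measurableSet_Ioi,
          Measure.restrict_apply measurableSet_Ioi, Ioi_inter_Ioi]
        have hpos : 0 < a ⊔ ε := lt_sup_of_lt_right hε
        rw [hval _ hpos, Measure.smul_apply, smul_eq_mul, rhoM_Ioi hpos, mul_comm]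
      · rw [Measure.restrict_apply_univ, Measure.restrict_apply_univ, hval ε hε,
          Measure.smul_apply, smul_eq_mul, rhoM_Ioi hε, mul_comm]
  -- product structure
  set ν := Measure.map (fun z => (Nn z, k z)) μ with hν
  have hmeas_pair : Measurable fun z : ℝ × ℝ => (Nn z, k z) := hNc.measurable.prodMk hk
  have hprod : rhoM.prod Φk = ν := by
    refine Measure.prod_eq ?_
    intro s t hs ht
    rw [hν, Measure.map_apply hmeas_pair (hs.prod ht)]
    have hpre : (fun z : ℝ × ℝ => (Nn z, k z)) ⁻¹' (s ×ˢ t) = Nn ⁻¹' s ∩ k ⁻¹' t := by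
      ext z; simp [Set.mem_prod]
    rw [hpre, ← hcap (Nn ⁻¹' s ∩ k ⁻¹' t)]
    have h1 := congrArg (fun m : Measure ℝ => m s) (hsec t ht)
    rw [Measure.map_apply hNc.measurable hs,
      Measure.restrict_apply (hNc.measurable hs)] at h1
    have hseteq : Nn ⁻¹' s ∩ {z | z ∈ Econe ∧ k z ∈ t} = Nn ⁻¹' s ∩ k ⁻¹' t ∩ Econe := by
      ext z; simp only [mem_inter_iff, mem_preimage, mem_setOf_eq]; tauto
    rw [hseteq] at h1
    rw [h1, Measure.smul_apply, smul_eq_mul, mul_comm]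
  -- final computation
  have hS : MeasurableSet {p : ℝ × ℝ | 1 < p.1 * p.2} :=
    measurableSet_lt measurable_const (measurable_fst.mul measurable_snd)
  calc ∫⁻ z in A, ENNReal.ofReal (k z) ∂μ
      = ∫⁻ t, ENNReal.ofReal t ∂Φk := by
        rw [hΦk, lintegral_map ENNReal.measurable_ofReal hk]
    _ = (rhoM.prod Φk) {p : ℝ × ℝ | 1 < p.1 * p.2} := by
        rw [Measure.prod_apply_symm hS]
        refine (lintegral_congr fun t => ?_).symm
        have hpre : (fun r : ℝ => (r, t)) ⁻¹' {p : ℝ × ℝ | 1 < p.1 * p.2}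
            = {r : ℝ | 1 < r * t} := rfl
        rw [hpre]
        rcases le_or_gt t 0 with htle | htpos
        · rw [ENNReal.ofReal_eq_zero.2 htle]
          refine measure_mono_null (fun r hr => ?_) rhoM_Iic
          simp only [mem_setOf_eq] at hr
          simp only [mem_Iic]
          by_contra hrpos
          push_neg at hrpos
          nlinarith
        · have hset : {r : ℝ | 1 < r * t} = Ioi t⁻¹ := by
            ext r
            simp only [mem_setOf_eq, mem_Ioi]
            constructor
            · intro h
              nlinarith [mul_inv_cancel₀ htpos.ne']
            · intro h
              nlinarith [mul_inv_cancel₀ htpos.ne', mul_lt_mul_of_pos_right h htpos]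
          rw [hset, rhoM_Ioi (inv_pos.2 htpos), inv_inv]
    _ = ν {p : ℝ × ℝ | 1 < p.1 * p.2} := by rw [hprod]
    _ = μ {z | 1 < Nn z * k z} := by
        rw [hν, Measure.map_apply hmeas_pair hS]
        rfl

lemma cap_lemma (μ : Measure (ℝ × ℝ)) (hμE : μ Econeᶜ = 0) (s : Set (ℝ × ℝ)) :
    μ (s ∩ Econe) = μ s := by
  refine le_antisymm (measure_mono inter_subset_left) ?_
  calc μ s ≤ μ (s ∩ Econe) + μ (s \ Econe) := measure_le_inter_add_diff μ s Econe
  _ ≤ μ (s ∩ Econe) + μ Econeᶜ := by gcongr; exact fun z hz => hz.2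
  _ = μ (s ∩ Econe) := by rw [hμE, add_zero]

lemma geom_lemma (Nn : ℝ × ℝ → ℝ)
    (hNs : ∀ (c : ℝ) (z), Nn (c • z) = |c| * Nn z) (hN10 : Nn (1, 0) = 1)
    {z : ℝ × ℝ} (hz : z ∈ Econe) (hNz : Nn z ≠ 0) :
    Real.sin (ang z) / Nn (Real.sin (ang z), Real.cos (ang z)) = z.1 / Nn z ∧
    Real.cos (ang z) / Nn (Real.sin (ang z), Real.cos (ang z)) = z.2 / Nn z := by
  obtain ⟨⟨h1, h2⟩, h3⟩ := hz
  simp only [mem_Ici] at h1 h2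
  by_cases hz2 : z.2 = 0
  · have hang : ang z = π / 2 := if_pos hz2
    rw [hang, Real.sin_pi_div_two, Real.cos_pi_div_two]
    have hz1 : z.1 ≠ 0 := by
      intro h
      exact h3 (by rw [mem_singleton_iff, Prod.ext_iff]; exact ⟨h, hz2⟩)
    have hz1pos : 0 < z.1 := lt_of_le_of_ne h1 (Ne.symm hz1)
    have hzeq : z = z.1 • ((1:ℝ), (0:ℝ)) := by
      rw [Prod.ext_iff]
      constructor <;> simp [hz2]
    have hNz' : Nn z = z.1 := by
      have h := hNs z.1 ((1:ℝ), (0:ℝ))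
      rw [hN10, abs_of_pos hz1pos, mul_one, ← hzeq] at h
      exact h
    rw [hNz', hN10]
    constructor
    · rw [div_one, div_self hz1]
    · rw [hz2, zero_div, zero_div]
  · have hz2pos : 0 < z.2 := lt_of_le_of_ne h2 (Ne.symm hz2)
    have hang : ang z = Real.arctan (z.1 / z.2) := if_neg hz2
    rw [hang]
    set θ := Real.arctan (z.1 / z.2) with hθ
    have hcos : 0 < Real.cos θ := Real.cos_arctan_pos _
    have hsin : Real.sin θ = (z.1 / z.2) * Real.cos θ := by
      have h := Real.tan_arctan (z.1 / z.2)
      rw [Real.tan_eq_sin_div_cos] at h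
      rw [← h]
      field_simp
      rfl
    have hpoint : (Real.sin θ, Real.cos θ) = (Real.cos θ / z.2) • z := by
      rw [Prod.ext_iff]
      constructor
      · simp only [Prod.smul_fst, smul_eq_mul]
        rw [hsin]
        field_simp
      · simp only [Prod.smul_snd, smul_eq_mul]
        field_simp
    have hNpt : Nn (Real.sin θ, Real.cos θ) = (Real.cos θ / z.2) * Nn z := by
      rw [hpoint, hNs, abs_of_pos (div_pos hcos hz2pos)]
    constructor
    · rw [hNpt, hsin]
      field_simp
    · rw [hNpt]
      field_simp

theorem stmt3 (μ : Measure (ℝ × ℝ)) (hμE : μ Econeᶜ = 0)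
    (hbf : ∀ ε > (0 : ℝ), μ {z | z ∈ Econe ∧ ε ≤ max z.1 z.2} < ⊤)
    (hhom : ∀ B : Set (ℝ × ℝ), B ⊆ Econe → MeasurableSet B → ∀ c > (0 : ℝ),
      μ (c • B) = ENNReal.ofReal c⁻¹ * μ B)
    (hstd : ∀ z > (0 : ℝ),
      μ {w | w ∈ Econe ∧ z ≤ w.1} = ENNReal.ofReal (1 / z) ∧
      μ {w | w ∈ Econe ∧ z ≤ w.2} = ENNReal.ofReal (1 / z))
    (Nn : ℝ × ℝ → ℝ)
    (hN_add : ∀ z w, Nn (z + w) ≤ Nn z + Nn w)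
    (hN_smul : ∀ (c : ℝ) (z), Nn (c • z) = |c| * Nn z)
    (hN_zero : ∀ z, Nn z = 0 ↔ z = 0)
    (hN10 : Nn (1, 0) = 1) (hN01 : Nn (0, 1) = 1)
    (Φ : Measure ℝ)
    (hΦ : ∀ B : Set ℝ, MeasurableSet B →
      Φ B = μ {z | z ∈ Econe ∧ 1 ≤ Nn z ∧ ang z ∈ B}) :
    (∫⁻ θ in Icc 0 (π / 2),
        ENNReal.ofReal (Real.sin θ / Nn (Real.sin θ, Real.cos θ)) ∂Φ) = 1 ∧
    (∫⁻ θ in Icc 0 (π / 2),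
        ENNReal.ofReal (Real.cos θ / Nn (Real.sin θ, Real.cos θ)) ∂Φ) = 1 := by
  have hN0 : Nn 0 = 0 := (hN_zero 0).2 rfl
  have hNneg : ∀ z, Nn (-z) = Nn z := by
    intro z
    have h := hN_smul (-1) z
    simpa using h
  have hNnonneg : ∀ z, 0 ≤ Nn z := by
    intro z
    have h := hN_add z (-z)
    rw [add_neg_cancel, hN0, hNneg] at h
    linarith
  have hNbound : ∀ v : ℝ × ℝ, Nn v ≤ |v.1| + |v.2| := by
    intro v
    have hv : v = v.1 • ((1:ℝ), (0:ℝ)) + v.2 • ((0:ℝ), (1:ℝ)) := by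
      rw [Prod.ext_iff]
      constructor <;> simp
    calc Nn v = Nn (v.1 • ((1:ℝ), (0:ℝ)) + v.2 • ((0:ℝ), (1:ℝ))) := by rw [← hv]
      _ ≤ Nn (v.1 • ((1:ℝ), (0:ℝ))) + Nn (v.2 • ((0:ℝ), (1:ℝ))) := hN_add _ _
      _ = |v.1| + |v.2| := by rw [hN_smul, hN_smul, hN10, hN01, mul_one, mul_one]
  have hNc : Continuous Nn := by
    have hlip : LipschitzWith 2 Nn := by
      refine LipschitzWith.of_dist_le_mul fun z w => ?_
      simp only [NNReal.coe_ofNat]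
      have h1 : Nn z - Nn w ≤ Nn (z - w) := by
        have h := hN_add w (z - w)
        rw [add_sub_cancel] at h
        linarith
      have h2 : Nn w - Nn z ≤ Nn (z - w) := by
        have h := hN_add z (w - z)
        rw [add_sub_cancel] at h
        have h3 : Nn (w - z) = Nn (z - w) := by
          rw [← hNneg (z - w), neg_sub]
        linarith
      have h4 : Nn (z - w) ≤ |z.1 - w.1| + |z.2 - w.2| := hNbound _
      have habs : |Nn z - Nn w| ≤ |z.1 - w.1| + |z.2 - w.2| :=
        abs_le.2 ⟨by linarith, by linarith⟩
      have m1 : |z.1 - w.1| ≤ max |z.1 - w.1| |z.2 - w.2| := le_max_left _ _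
      have m2 : |z.2 - w.2| ≤ max |z.1 - w.1| |z.2 - w.2| := le_max_right _ _
      calc dist (Nn z) (Nn w) = |Nn z - Nn w| := Real.dist_eq _ _
        _ ≤ 2 * max |z.1 - w.1| |z.2 - w.2| := by linarith
        _ = 2 * dist z w := by
            rw [Prod.dist_eq, Real.dist_eq, Real.dist_eq]
    exact hlip.continuous
  have hNpos : ∀ z ∈ Econe, 0 < Nn z := by
    intro z hz
    refine lt_of_le_of_ne (hNnonneg z) (Ne.symm fun h => ?_)
    have hz0 : z = 0 := (hN_zero z).1 h
    exact hz.2 (by rw [mem_singleton_iff, hz0]; rfl)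
  set A := {z | z ∈ Econe ∧ 1 ≤ Nn z} with hA
  have hAm : MeasurableSet A := by
    have h : A = Econe ∩ Nn ⁻¹' (Ici 1) := rfl
    rw [h]
    exact cone_measurable.inter (hNc.measurable measurableSet_Ici)
  have hfin : μ A ≠ ⊤ := by
    have hsub : A ⊆ {z | z ∈ Econe ∧ (1/2 : ℝ) ≤ max z.1 z.2} := by
      rintro z ⟨hc, hN⟩
      refine ⟨hc, ?_⟩
      obtain ⟨⟨h1, h2⟩, -⟩ := hc
      simp only [mem_Ici] at h1 h2
      have hb := hNbound z
      rw [abs_of_nonneg h1, abs_of_nonneg h2] at hb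
      have m1 := le_max_left z.1 z.2
      have m2 := le_max_right z.1 z.2
      linarith
    exact ((measure_mono hsub).trans_lt (hbf (1/2) (by norm_num))).ne
  have hangM : Measurable ang := by
    have hset : MeasurableSet {z : ℝ × ℝ | z.2 = 0} := measurable_snd (measurableSet_singleton 0)
    exact Measurable.ite hset measurable_const
      (Real.continuous_arctan.measurable.comp (measurable_fst.div measurable_snd))
  have hΦmap : Φ = Measure.map ang (μ.restrict A) := by
    refine Measure.ext fun B hB => ?_
    rw [hΦ B hB, Measure.map_apply hangM hB, Measure.restrict_apply (hangM hB)]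
    congr 1
    ext z
    simp only [mem_inter_iff, mem_preimage, mem_setOf_eq, hA]
    tauto
  have hAsub : A ⊆ ang ⁻¹' (Icc 0 (π/2)) := by
    rintro z ⟨⟨⟨h1, h2⟩, -⟩, -⟩
    simp only [mem_Ici] at h1 h2
    simp only [mem_preimage, mem_Icc, ang]
    split_ifs with h
    · constructor
      · linarith [Real.pi_pos]
      · exact le_refl _
    · have hz2 : 0 < z.2 := lt_of_le_of_ne h2 (Ne.symm h)
      exact ⟨by
          rw [← Real.arctan_zero]
          exact Real.arctan_strictMono.monotone (div_nonneg h1 h2), (Real.arctan_lt_pi_div_two _).le⟩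
  have main : ∀ sel : ℝ × ℝ → ℝ, Measurable sel →
      (∀ c : ℝ, 0 < c → ∀ z : ℝ × ℝ, sel (c • z) = c * sel z) →
      (∀ z ∈ Econe, sel (Real.sin (ang z), Real.cos (ang z)) /
          Nn (Real.sin (ang z), Real.cos (ang z)) = sel z / Nn z) →
      (∀ s : ℝ, 0 < s → μ {w | w ∈ Econe ∧ s ≤ sel w} = ENNReal.ofReal (1 / s)) →
      ∫⁻ θ in Icc 0 (π/2),
        ENNReal.ofReal (sel (Real.sin θ, Real.cos θ) / Nn (Real.sin θ, Real.cos θ)) ∂Φ = 1 := by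
    intro sel hselm hsel_smul hgeom hmarg
    set k := fun z : ℝ × ℝ => sel z / Nn z with hkdef
    have hkm : Measurable k := hselm.div hNc.measurable
    have hk0 : ∀ c > (0:ℝ), ∀ z, k (c • z) = k z := by
      intro c hc z
      simp only [hkdef]
      rw [hsel_smul c hc, hN_smul, abs_of_pos hc, mul_div_mul_left _ _ hc.ne']
    have hmeas_sincos : Measurable fun θ : ℝ => (Real.sin θ, Real.cos θ) :=
      (Real.continuous_sin.prodMk Real.continuous_cos).measurable
    have hFm : Measurable fun θ : ℝ =>
        ENNReal.ofReal (sel (Real.sin θ, Real.cos θ) / Nn (Real.sin θ, Real.cos θ)) :=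
      ENNReal.measurable_ofReal.comp
        ((hselm.comp hmeas_sincos).div (hNc.measurable.comp hmeas_sincos))
    have hΦint : ∫⁻ θ in Icc 0 (π/2),
        ENNReal.ofReal (sel (Real.sin θ, Real.cos θ) / Nn (Real.sin θ, Real.cos θ)) ∂Φ
        = ∫⁻ z in A, ENNReal.ofReal (k z) ∂μ := by
      rw [hΦmap, setLIntegral_map measurableSet_Icc hFm hangM,
        Measure.restrict_restrict (hangM measurableSet_Icc),
        inter_eq_self_of_subset_right hAsub]
      refine setLIntegral_congr_fun hAm (fun z hz => ?_)
      congr 1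
      exact hgeom z hz.1
    rw [hΦint,
      key_lemma μ hμE hhom Nn hNc hNpos hN_smul hfin k hkm hk0]
    have hseteq : {z | 1 < Nn z * k z} ∩ Econe = {z | z ∈ Econe ∧ 1 < sel z} := by
      ext z
      simp only [mem_inter_iff, mem_setOf_eq, hkdef]
      constructor
      · rintro ⟨hlt, hc⟩
        rw [mul_comm, div_mul_cancel₀ _ (hNpos z hc).ne'] at hlt
        exact ⟨hc, hlt⟩
      · rintro ⟨hc, hlt⟩
        refine ⟨?_, hc⟩
        rw [mul_comm, div_mul_cancel₀ _ (hNpos z hc).ne']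
        exact hlt
    rw [← cap_lemma μ hμE {z | 1 < Nn z * k z}, hseteq]
    have hgen : ∀ s : ℝ, 0 < s →
        μ {z | (z ∈ Econe) ∧ s ≤ sel z} = ENNReal.ofReal s⁻¹ * 1 := by
      intro s hs
      rw [hmarg s hs, mul_one, one_div]
    have h := aux_measure_gt μ (fun z => z ∈ Econe) sel (c := 1) (by simp) hgen one_pos
    rw [h]
    simp
  refine ⟨?_, ?_⟩
  · refine main (fun z => z.1) measurable_fst ?_ ?_ ?_
    · intro c hc z
      simp [smul_eq_mul]
    · intro z hz
      exact (geom_lemma Nn hN_smul hN10 hz (hNpos z hz).ne').1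
    · intro s hs
      exact (hstd s hs).1
  · refine main (fun z => z.2) measurable_snd ?_ ?_ ?_
    · intro c hc z
      simp [smul_eq_mul]
    · intro z hz
      exact (geom_lemma Nn hN_smul hN10 hz (hNpos z hz).ne').2
    · intro s hs
      exact (hstd s hs).2
end
end

section
/- Let μ be a boundedly finite Borel measure on E = [0,∞)² ∖ {(0,0)} that is homogeneous of degree −1, fix p ∈ [1,∞], let Φ_p be the spectral measure of μ with respect to the L_p norm, and let Λ = ι_*μ be the pushforward of μ under ι(z₁,z₂) = (1/z₁, 1/z₂) (with 1/0 = ∞). Then Φ_p([0,θ]) = Λ(C_{p,θ}) for every θ ∈ [0,π/2], where C_{p,0} = ([0,∞]×{0}) ∪ ({∞}×[0,1]), C_{p,θ} = {(x,y) ∈ [0,∞]² : y ≤ min(x·tanθ, y_p(x))} for θ ∈ (0,π/2), and C_{p,π/2} = {(x,y) ∈ [0,∞]² : y ≤ y_p(x)}. -/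
open MeasureTheory Set Real Filter Topology
open scoped ENNReal Pointwise

noncomputable section

/-- The `L_p` norm on `ℝ²`, for `p ∈ [1,∞]`. -/
def lpnorm (p : ℝ≥0∞) (z : ℝ × ℝ) : ℝ :=
  if p = ⊤ then max |z.1| |z.2|
  else (|z.1| ^ p.toReal + |z.2| ^ p.toReal) ^ (1 / p.toReal)

/-- The function `y_p : [0,∞] → [0,∞]`: for `p < ∞`, `y_p(x) = ∞` on `[0,1]`,
`y_p(x) = (1 + 1/(x^p - 1))^{1/p}` on `(1,∞)` and `y_p(∞) = 1`; for `p = ∞`,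
`y_∞(x) = ∞` on `[0,1)` and `y_∞(x) = 1` on `[1,∞]`. -/
def ypE (p : ℝ≥0∞) (x : ℝ≥0∞) : ℝ≥0∞ :=
  if p = ⊤ then (if x < 1 then ⊤ else 1)
  else if x ≤ 1 then ⊤
  else if x = ⊤ then 1
  else ENNReal.ofReal ((1 + 1 / (x.toReal ^ p.toReal - 1)) ^ (1 / p.toReal))

/-- The region `C_{p,θ} ⊆ [0,∞]²`. -/
def Cpset (p : ℝ≥0∞) (θ : ℝ) : Set (ℝ≥0∞ × ℝ≥0∞) :=
  if θ = 0 then (univ ×ˢ {0}) ∪ ({⊤} ×ˢ Iic 1)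
  else if θ = π / 2 then {q | q.2 ≤ ypE p q.1}
  else {q | q.2 ≤ min (q.1 * ENNReal.ofReal (Real.tan θ)) (ypE p q.1)}

/-- The coordinatewise inversion `ι(z₁,z₂) = (1/z₁, 1/z₂)`, with values in `[0,∞]²`
and the convention `1/0 = ∞`. -/
def iota (z : ℝ × ℝ) : ℝ≥0∞ × ℝ≥0∞ := ((ENNReal.ofReal z.1)⁻¹, (ENNReal.ofReal z.2)⁻¹)

lemma mem_Econe {z : ℝ × ℝ} : z ∈ Econe ↔ 0 ≤ z.1 ∧ 0 ≤ z.2 ∧ ¬(z.1 = 0 ∧ z.2 = 0) := by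
  simp only [Econe, mem_diff, mem_prod, mem_Ici, mem_singleton_iff, Prod.ext_iff]
  tauto

lemma one_le_rpow_iff' {s r : ℝ} (hs : 0 ≤ s) (hr : 0 < r) : 1 ≤ s ^ r ↔ 1 ≤ s := by
  nth_rewrite 1 [show (1:ℝ) = 1 ^ r by simp]
  exact Real.rpow_le_rpow_iff zero_le_one hs hr

lemma measurable_iota : Measurable iota :=
  ((ENNReal.measurable_ofReal.comp measurable_fst).inv).prodMk
    ((ENNReal.measurable_ofReal.comp measurable_snd).inv)

lemma measurable_ypE (p : ℝ≥0∞) : Measurable (ypE p) := by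
  unfold ypE
  by_cases hp : p = ⊤ <;> simp only [hp, if_true, if_false]
  · exact Measurable.ite (measurableSet_lt measurable_id measurable_const) measurable_const
      measurable_const
  · refine Measurable.ite (measurableSet_le measurable_id measurable_const) measurable_const ?_
    refine Measurable.ite (measurableSet_singleton (⊤ : ℝ≥0∞)) measurable_const ?_
    refine ENNReal.measurable_ofReal.comp ?_
    measurability

lemma measurable_Cpset (p : ℝ≥0∞) (θ : ℝ) : MeasurableSet (Cpset p θ) := by
  unfold Cpset
  split_ifs
  · exact (MeasurableSet.univ.prod (measurableSet_singleton 0)).union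
      ((measurableSet_singleton ⊤).prod measurableSet_Iic)
  · exact measurableSet_le measurable_snd ((measurable_ypE p).comp measurable_fst)
  · exact measurableSet_le measurable_snd
      ((measurable_fst.mul measurable_const).min ((measurable_ypE p).comp measurable_fst))

lemma ypE_top (x : ℝ≥0∞) : ypE ⊤ x = if x < 1 then ⊤ else 1 := by simp [ypE]

lemma ypE_ne_top {p : ℝ≥0∞} (hpt : p ≠ ⊤) (x : ℝ≥0∞) : ypE p x =
    if x ≤ 1 then ⊤
    else if x = ⊤ then 1
    else ENNReal.ofReal ((1 + 1 / (x.toReal ^ p.toReal - 1)) ^ (1 / p.toReal)) := by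
  simp [ypE, hpt]

lemma lpnorm_top (z : ℝ × ℝ) : lpnorm ⊤ z = max |z.1| |z.2| := by simp [lpnorm]

lemma lpnorm_ne_top {p : ℝ≥0∞} (hpt : p ≠ ⊤) (z : ℝ × ℝ) :
    lpnorm p z = (|z.1| ^ p.toReal + |z.2| ^ p.toReal) ^ (1 / p.toReal) := by
  simp [lpnorm, hpt]

lemma toReal_pos_of_one_le {p : ℝ≥0∞} (hp : 1 ≤ p) (hpt : p ≠ ⊤) : 0 < p.toReal := by
  have h := ENNReal.toReal_mono hpt hp
  rw [ENNReal.toReal_one] at h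
  linarith

lemma norm_of_inv {p : ℝ≥0∞} (hp : 1 ≤ p) {z : ℝ × ℝ} (hz : z ∈ Econe)
    (h : (ENNReal.ofReal z.2)⁻¹ ≤ ypE p ((ENNReal.ofReal z.1)⁻¹)) : 1 ≤ lpnorm p z := by
  obtain ⟨ha, hb, hab⟩ := mem_Econe.mp hz
  by_cases hpt : p = ⊤
  · subst hpt
    rw [ypE_top] at h
    rw [lpnorm_top, abs_of_nonneg ha, abs_of_nonneg hb]
    by_cases hx : (ENNReal.ofReal z.1)⁻¹ < 1
    · have h1 : 1 < z.1 := by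
        rwa [ENNReal.inv_lt_one, ENNReal.one_lt_ofReal] at hx
      exact le_max_of_le_left h1.le
    · rw [if_neg hx, ENNReal.inv_le_one, ENNReal.one_le_ofReal] at h
      exact le_max_of_le_right h
  · have hr : 0 < p.toReal := toReal_pos_of_one_le hp hpt
    set r := p.toReal with hrdef
    rw [lpnorm_ne_top hpt, abs_of_nonneg ha, abs_of_nonneg hb, ← hrdef]
    rw [one_le_rpow_iff' (by positivity) (by positivity : (0:ℝ) < 1/r)]
    rw [ypE_ne_top hpt] at h
    by_cases hx1 : (ENNReal.ofReal z.1)⁻¹ ≤ 1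
    · have h1 : 1 ≤ z.1 := by rwa [ENNReal.inv_le_one, ENNReal.one_le_ofReal] at hx1
      have h2 := Real.one_le_rpow h1 (le_of_lt hr)
      nlinarith [Real.rpow_nonneg hb r]
    · rw [if_neg hx1] at h
      have ha1 : z.1 < 1 := by
        rw [not_le] at hx1
        rwa [ENNReal.one_lt_inv, ENNReal.ofReal_lt_one] at hx1
      by_cases hxt : (ENNReal.ofReal z.1)⁻¹ = ⊤
      · rw [if_pos hxt, ENNReal.inv_le_one, ENNReal.one_le_ofReal] at h
        have ha0 : z.1 = 0 := by
          rw [ENNReal.inv_eq_top, ENNReal.ofReal_eq_zero] at hxt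
          exact le_antisymm hxt ha
        rw [ha0, Real.zero_rpow hr.ne', zero_add]
        exact Real.one_le_rpow h hr.le
      · rw [if_neg hxt] at h
        have ha0 : 0 < z.1 := by
          rcases eq_or_lt_of_le ha with h0 | h0
          · exact absurd (by rw [ENNReal.inv_eq_top, ENNReal.ofReal_eq_zero]; simp [← h0]) hxt
          · exact h0
        have htr : ((ENNReal.ofReal z.1)⁻¹).toReal = z.1⁻¹ := by
          rw [← ENNReal.ofReal_inv_of_pos ha0, ENNReal.toReal_ofReal (by positivity)]
        rw [htr, ← hrdef, Real.inv_rpow ha] at h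
        have hs1 : z.1 ^ r < 1 := Real.rpow_lt_one ha ha1 hr
        have hs0 : 0 < z.1 ^ r := Real.rpow_pos_of_pos ha0 r
        have hu : 0 < 1 - z.1 ^ r := by linarith
        have key : 1 + 1 / ((z.1 ^ r)⁻¹ - 1) = (1 - z.1 ^ r)⁻¹ := by
          have hinv : (1:ℝ) < (z.1 ^ r)⁻¹ := (one_lt_inv₀ hs0).mpr hs1
          have hne : (z.1 ^ r)⁻¹ - 1 ≠ 0 := by linarith
          field_simp
          ring
        rw [key] at h
        rw [show (1 - z.1^r)⁻¹ ^ (1/r) = ((1 - z.1^r) ^ (1/r))⁻¹ from Real.inv_rpow hu.le _] at h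
        have hb0 : 0 < z.2 := by
          rcases eq_or_lt_of_le hb with h0 | h0
          · rw [← h0, ENNReal.ofReal_zero, ENNReal.inv_zero] at h
            exact absurd (top_le_iff.mp h) ENNReal.ofReal_ne_top
          · exact h0
        have hw : 0 < (1 - z.1^r) ^ (1/r) := Real.rpow_pos_of_pos hu _
        rw [← ENNReal.ofReal_inv_of_pos hb0, ENNReal.ofReal_le_ofReal_iff (by positivity)] at h
        have h2 : (1 - z.1^r) ^ (1/r) ≤ z.2 := by
          rwa [inv_le_inv₀ (by positivity) hw] at h
        have h3 := Real.rpow_le_rpow hw.le h2 hr.le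
        rw [← Real.rpow_mul hu.le, one_div, inv_mul_cancel₀ hr.ne', Real.rpow_one] at h3
        linarith

lemma inv_of_norm {p : ℝ≥0∞} (hp : 1 ≤ p) {z : ℝ × ℝ} (hz : z ∈ Econe)
    (h1 : 1 ≤ lpnorm p z) (hex : p = ⊤ → z.1 = 1 → 1 ≤ z.2) :
    (ENNReal.ofReal z.2)⁻¹ ≤ ypE p ((ENNReal.ofReal z.1)⁻¹) := by
  obtain ⟨ha, hb, hab⟩ := mem_Econe.mp hz
  by_cases hpt : p = ⊤
  · subst hpt
    rw [lpnorm_top, abs_of_nonneg ha, abs_of_nonneg hb] at h1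
    rw [ypE_top]
    by_cases hx : (ENNReal.ofReal z.1)⁻¹ < 1
    · rw [if_pos hx]; exact le_top
    · rw [if_neg hx, ENNReal.inv_le_one, ENNReal.one_le_ofReal]
      have ha1 : z.1 ≤ 1 := by
        by_contra hc
        exact hx (by rwa [ENNReal.inv_lt_one, ENNReal.one_lt_ofReal, ← not_le])
      rcases eq_or_lt_of_le ha1 with he | hl
      · exact hex rfl he
      · rcases le_or_gt 1 z.2 with h2 | h2
        · exact h2
        · exact absurd h1 (by rw [not_le]; exact max_lt hl h2)
  · have hr : 0 < p.toReal := toReal_pos_of_one_le hp hpt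
    set r := p.toReal with hrdef
    rw [lpnorm_ne_top hpt, abs_of_nonneg ha, abs_of_nonneg hb, ← hrdef,
      one_le_rpow_iff' (by positivity) (by positivity : (0:ℝ) < 1/r)] at h1
    rw [ypE_ne_top hpt, ← hrdef]
    by_cases hx1 : (ENNReal.ofReal z.1)⁻¹ ≤ 1
    · rw [if_pos hx1]; exact le_top
    · rw [if_neg hx1]
      have ha1 : z.1 < 1 := by
        rw [not_le] at hx1
        rwa [ENNReal.one_lt_inv, ENNReal.ofReal_lt_one] at hx1
      have hs1 : z.1 ^ r < 1 := Real.rpow_lt_one ha ha1 hr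
      by_cases hxt : (ENNReal.ofReal z.1)⁻¹ = ⊤
      · rw [if_pos hxt, ENNReal.inv_le_one, ENNReal.one_le_ofReal]
        have ha0 : z.1 = 0 := by
          rw [ENNReal.inv_eq_top, ENNReal.ofReal_eq_zero] at hxt
          exact le_antisymm hxt ha
        rw [ha0, Real.zero_rpow hr.ne', zero_add] at h1
        by_contra hc
        rw [not_le] at hc
        exact absurd h1 (by rw [not_le]; exact Real.rpow_lt_one hb hc hr)
      · rw [if_neg hxt]
        have ha0 : 0 < z.1 := by
          rcases eq_or_lt_of_le ha with h0 | h0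
          · exact absurd (by rw [ENNReal.inv_eq_top, ENNReal.ofReal_eq_zero]; simp [← h0]) hxt
          · exact h0
        have htr : ((ENNReal.ofReal z.1)⁻¹).toReal = z.1⁻¹ := by
          rw [← ENNReal.ofReal_inv_of_pos ha0, ENNReal.toReal_ofReal (by positivity)]
        rw [htr, Real.inv_rpow ha]
        have hs0 : 0 < z.1 ^ r := Real.rpow_pos_of_pos ha0 r
        have hu : 0 < 1 - z.1 ^ r := by linarith
        have key : 1 + 1 / ((z.1 ^ r)⁻¹ - 1) = (1 - z.1 ^ r)⁻¹ := by
          have hinv : (1:ℝ) < (z.1 ^ r)⁻¹ := (one_lt_inv₀ hs0).mpr hs1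
          have hne : (z.1 ^ r)⁻¹ - 1 ≠ 0 := by linarith
          field_simp
          ring
        rw [key,
          show (1 - z.1^r)⁻¹ ^ (1/r) = ((1 - z.1^r) ^ (1/r))⁻¹ from Real.inv_rpow hu.le _]
        have hb0 : 0 < z.2 := by
          rcases eq_or_lt_of_le hb with h0 | h0
          · rw [← h0, Real.zero_rpow hr.ne'] at h1
            linarith
          · exact h0
        have hw : 0 < (1 - z.1^r) ^ (1/r) := Real.rpow_pos_of_pos hu _
        rw [← ENNReal.ofReal_inv_of_pos hb0, ENNReal.ofReal_le_ofReal_iff (by positivity)]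
        rw [inv_le_inv₀ (by positivity) hw]
        rw [one_div, rpow_inv_le_iff_of_pos hu.le hb hr]
        linarith

lemma ang_nonneg {z : ℝ × ℝ} (hz : z ∈ Econe) : 0 ≤ ang z := by
  obtain ⟨ha, hb, hab⟩ := mem_Econe.mp hz
  unfold ang
  split_ifs with h
  · positivity
  · rw [← Real.arctan_zero]
    exact Real.arctan_strictMono.monotone (by positivity)

lemma ang_le_pi_div_two {z : ℝ × ℝ} : ang z ≤ π / 2 := by
  unfold ang
  split_ifs with h
  · exact le_refl _
  · exact (Real.arctan_lt_pi_div_two _).le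

lemma ang_iff {θ : ℝ} (hθ1 : 0 < θ) (hθ2 : θ < π / 2) {z : ℝ × ℝ} (hz : z ∈ Econe) :
    ang z ≤ θ ↔
      (ENNReal.ofReal z.2)⁻¹ ≤ (ENNReal.ofReal z.1)⁻¹ * ENNReal.ofReal (Real.tan θ) := by
  obtain ⟨ha, hb, hab⟩ := mem_Econe.mp hz
  have htan : 0 < Real.tan θ := Real.tan_pos_of_pos_of_lt_pi_div_two hθ1 hθ2
  by_cases hb0 : z.2 = 0
  · have ha0 : 0 < z.1 := by
      rcases eq_or_lt_of_le ha with h0 | h0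
      · exact absurd ⟨h0.symm, hb0⟩ hab
      · exact h0
    unfold ang
    rw [if_pos hb0]
    constructor
    · intro h; linarith
    · intro h
      exfalso
      rw [hb0, ENNReal.ofReal_zero, ENNReal.inv_zero, top_le_iff] at h
      have : (ENNReal.ofReal z.1)⁻¹ * ENNReal.ofReal (Real.tan θ) ≠ ⊤ := by
        apply ENNReal.mul_ne_top
        · rw [Ne, ENNReal.inv_eq_top, ENNReal.ofReal_eq_zero]; linarith
        · exact ENNReal.ofReal_ne_top
      exact this h
  · have hb1 : 0 < z.2 := lt_of_le_of_ne hb (Ne.symm hb0)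
    unfold ang
    rw [if_neg hb0]
    have harct : Real.arctan (z.1 / z.2) ≤ θ ↔ z.1 ≤ z.2 * Real.tan θ := by
      rw [show θ = Real.arctan (Real.tan θ) from
        (Real.arctan_tan (by linarith) hθ2).symm]
      rw [Real.arctan_strictMono.le_iff_le, Real.arctan_tan (by linarith) hθ2]
      rw [div_le_iff₀ hb1]
      rw [mul_comm]
    rw [harct]
    by_cases ha0 : z.1 = 0
    · simp only [ha0, ENNReal.ofReal_zero, ENNReal.inv_zero]
      rw [ENNReal.top_mul (by rw [Ne, ENNReal.ofReal_eq_zero]; linarith)]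
      constructor
      · intro _; exact le_top
      · intro _; positivity
    · have ha1 : 0 < z.1 := lt_of_le_of_ne ha (Ne.symm ha0)
      rw [← ENNReal.ofReal_inv_of_pos ha1, ← ENNReal.ofReal_inv_of_pos hb1,
        ← ENNReal.ofReal_mul (by positivity), ENNReal.ofReal_le_ofReal_iff (by positivity)]
      rw [show z.1⁻¹ * Real.tan θ = Real.tan θ / z.1 by ring, le_div_iff₀ ha1,
        show z.2⁻¹ * z.1 = z.1 / z.2 by ring, div_le_iff₀ hb1, mul_comm (Real.tan θ) z.2]

lemma lpnorm_fst_zero {p : ℝ≥0∞} (hp : 1 ≤ p) {z : ℝ × ℝ} (ha0 : z.1 = 0) (hb : 0 ≤ z.2) :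
    1 ≤ lpnorm p z ↔ 1 ≤ z.2 := by
  by_cases hpt : p = ⊤
  · subst hpt
    rw [lpnorm_top, ha0, abs_zero, abs_of_nonneg hb, max_eq_right hb]
  · have hr : 0 < p.toReal := toReal_pos_of_one_le hp hpt
    rw [lpnorm_ne_top hpt, ha0, abs_zero, abs_of_nonneg hb, Real.zero_rpow hr.ne', zero_add,
      one_le_rpow_iff' (Real.rpow_nonneg hb _) (by positivity), one_le_rpow_iff' hb hr]

lemma seg_null (μ : Measure (ℝ × ℝ))
    (hbf : ∀ ε > (0:ℝ), μ {z | z ∈ Econe ∧ ε ≤ max z.1 z.2} < ⊤)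
    (hhom : ∀ B : Set (ℝ × ℝ), B ⊆ Econe → MeasurableSet B → ∀ c > (0:ℝ),
      μ (c • B) = ENNReal.ofReal c⁻¹ * μ B) :
    μ ({(1:ℝ)} ×ˢ Ico (0:ℝ) 1) = 0 := by
  by_contra hL
  set L : Set (ℝ × ℝ) := {(1:ℝ)} ×ˢ Ico (0:ℝ) 1 with hLdef
  have hLsub : L ⊆ Econe := by
    rintro ⟨x, y⟩ ⟨hx, hy⟩
    simp only [mem_singleton_iff] at hx
    rw [mem_Econe]
    exact ⟨by simp [hx], hy.1, by rintro ⟨h1, -⟩; simp [hx] at h1⟩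
  have hLm : MeasurableSet L := (measurableSet_singleton 1).prod measurableSet_Ico
  set c : ℕ → ℝ := fun n => 1 + 1/(n+1) with hc
  have hpos : ∀ n : ℕ, (0:ℝ) < 1/((n:ℝ)+1) := fun n => by positivity
  have hc1 : ∀ n, 1 < c n := fun n => by
    have := hpos n; simp only [hc]; linarith
  have hc2 : ∀ n, c n ≤ 2 := fun n => by
    have h1 : 1/((n:ℝ)+1) ≤ 1 := by
      rw [div_le_one (by positivity)]
      linarith [(n.cast_nonneg : (0:ℝ) ≤ n)]
    simp only [hc]; linarith
  have hcinj : Function.Injective c := by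
    intro m n h
    simp only [hc] at h
    have h2 : (1:ℝ)/(m+1) = 1/(n+1) := by linarith
    field_simp at h2
    exact_mod_cast (by linarith : (m:ℝ) = n)
  have hsmul : ∀ n, (c n) • L = {c n} ×ˢ Ico 0 (c n) := by
    intro n
    have hcn : 0 < c n := by linarith [hc1 n]
    ext ⟨x, y⟩
    constructor
    · rintro ⟨⟨w1, w2⟩, ⟨hw1, hw2⟩, hww⟩
      simp only [mem_singleton_iff] at hw1
      simp only [Prod.smul_mk, smul_eq_mul, Prod.mk.injEq] at hww
      obtain ⟨hx, hy⟩ := hww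
      refine ⟨?_, ?_, ?_⟩
      · simp only [mem_singleton_iff]
        rw [← hx, hw1, mul_one]
      · rw [← hy]; exact mul_nonneg hcn.le hw2.1
      · rw [← hy]
        calc c n * w2 < c n * 1 := by
              exact mul_lt_mul_of_pos_left hw2.2 hcn
          _ = c n := mul_one _
    · rintro ⟨hx, hy1, hy2⟩
      simp only [mem_singleton_iff] at hx
      refine ⟨(1, y / c n), ⟨rfl, div_nonneg hy1 hcn.le, (div_lt_one hcn).mpr hy2⟩, ?_⟩
      simp only [Prod.smul_mk, smul_eq_mul, Prod.mk.injEq]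
      exact ⟨by rw [mul_one, hx], mul_div_cancel₀ y hcn.ne'⟩
  have hTm : ∀ n, MeasurableSet ({c n} ×ˢ Ico 0 (c n)) :=
    fun n => (measurableSet_singleton _).prod measurableSet_Ico
  have hdisj : Pairwise (Function.onFun Disjoint (fun n => {c n} ×ˢ Ico 0 (c n))) := by
    intro m n hmn
    simp only [Function.onFun]
    rw [Set.disjoint_left]
    rintro ⟨x, y⟩ ⟨hx, -⟩ ⟨hx', -⟩
    simp only [mem_singleton_iff] at hx hx'
    exact hmn (hcinj (by rw [← hx, ← hx']))
  have hmeasT : ∀ n, μ ({c n} ×ˢ Ico 0 (c n)) = ENNReal.ofReal (c n)⁻¹ * μ L := fun n => by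
    rw [← hsmul n]
    exact hhom L hLsub hLm (c n) (by linarith [hc1 n])
  have hUsub : (⋃ n, {c n} ×ˢ Ico 0 (c n)) ⊆ {z | z ∈ Econe ∧ 1 ≤ max z.1 z.2} := by
    rintro ⟨x, y⟩ hz
    simp only [mem_iUnion] at hz
    obtain ⟨n, hx, hy1, hy2⟩ := hz
    simp only [mem_singleton_iff] at hx
    subst hx
    constructor
    · rw [mem_Econe]
      exact ⟨by linarith [hc1 n], hy1, by rintro ⟨h1, -⟩; simp only at h1; linarith [hc1 n]⟩
    · exact le_max_of_le_left (by linarith [hc1 n])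
  have hfin : μ (⋃ n, {c n} ×ˢ Ico 0 (c n)) < ⊤ :=
    lt_of_le_of_lt (measure_mono hUsub) (hbf 1 one_pos)
  rw [measure_iUnion hdisj hTm] at hfin
  have hlb : ∀ n : ℕ, ENNReal.ofReal (2:ℝ)⁻¹ * μ L ≤ μ ({c n} ×ˢ Ico 0 (c n)) := fun n => by
    rw [hmeasT n]
    refine mul_le_mul_left (ENNReal.ofReal_le_ofReal ?_) _
    exact (inv_le_inv₀ two_pos (by linarith [hc1 n])).mpr (hc2 n)
  have htop : (⊤:ℝ≥0∞) ≤ ∑' n, μ ({c n} ×ˢ Ico 0 (c n)) :=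
    calc (⊤:ℝ≥0∞) = ∑' _ : ℕ, ENNReal.ofReal (2:ℝ)⁻¹ * μ L :=
        (ENNReal.tsum_const_eq_top_of_ne_zero
          (mul_ne_zero (by rw [Ne, ENNReal.ofReal_eq_zero]; norm_num) hL)).symm
      _ ≤ _ := ENNReal.tsum_le_tsum hlb
  exact absurd (lt_of_le_of_lt htop hfin) (lt_irrefl ⊤)

theorem stmt9 (μ : Measure (ℝ × ℝ)) (hμE : μ Econeᶜ = 0)
    (hbf : ∀ ε > (0 : ℝ), μ {z | z ∈ Econe ∧ ε ≤ max z.1 z.2} < ⊤)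
    (hhom : ∀ B : Set (ℝ × ℝ), B ⊆ Econe → MeasurableSet B → ∀ c > (0 : ℝ),
      μ (c • B) = ENNReal.ofReal c⁻¹ * μ B)
    (p : ℝ≥0∞) (hp : 1 ≤ p)
    (Φ : Measure ℝ)
    (hΦ : ∀ B : Set ℝ, MeasurableSet B →
      Φ B = μ {z | z ∈ Econe ∧ 1 ≤ lpnorm p z ∧ ang z ∈ B})
    (Λ : Measure (ℝ≥0∞ × ℝ≥0∞)) (hΛ : Λ = μ.map iota) :
    ∀ θ ∈ Icc (0 : ℝ) (π / 2), Φ (Icc 0 θ) = Λ (Cpset p θ) := by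
  intro θ hθ
  have hΛ' : Λ (Cpset p θ) = μ (iota ⁻¹' Cpset p θ) := by
    rw [hΛ, Measure.map_apply measurable_iota (measurable_Cpset p θ)]
  have key : ∀ A : Set (ℝ × ℝ), μ A = μ (A ∩ Econe) := by
    intro A
    apply le_antisymm
    · calc μ A = μ ((A ∩ Econe) ∪ (A ∩ Econeᶜ)) := by rw [inter_union_compl]
        _ ≤ μ (A ∩ Econe) + μ (A ∩ Econeᶜ) := measure_union_le _ _
        _ ≤ μ (A ∩ Econe) + 0 :=
            add_le_add le_rfl (le_trans (measure_mono inter_subset_right) (le_of_eq hμE))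
        _ = μ (A ∩ Econe) := add_zero _
    · exact measure_mono inter_subset_left
  rw [hΦ _ measurableSet_Icc, hΛ', key (iota ⁻¹' Cpset p θ)]
  by_cases hθ0 : θ = 0
  · subst hθ0
    congr 1
    ext z
    simp only [Cpset, if_pos rfl, mem_setOf_eq, mem_inter_iff, mem_preimage, mem_union,
      iota, mem_Icc, Set.mem_prod, mem_univ, true_and, mem_singleton_iff, mem_Iic]
    constructor
    · rintro ⟨hzE, hnorm, hang1, hang2⟩
      obtain ⟨ha, hb, hab⟩ := mem_Econe.mp hzE
      have hang0 : ang z = 0 := le_antisymm hang2 hang1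
      have hb0 : z.2 ≠ 0 := by
        intro h
        unfold ang at hang0
        rw [if_pos h] at hang0
        have := Real.pi_pos
        linarith
      unfold ang at hang0
      rw [if_neg hb0] at hang0
      have ha0 : z.1 = 0 := by
        rcases div_eq_zero_iff.mp (Real.arctan_eq_zero_iff.mp hang0) with h | h
        · exact h
        · exact absurd h hb0
      refine ⟨Or.inr ⟨?_, ?_⟩, hzE⟩
      · show (ENNReal.ofReal z.1)⁻¹ = ⊤
        rw [ha0]; simp
      · show (ENNReal.ofReal z.2)⁻¹ ≤ 1
        rw [ENNReal.inv_le_one, ENNReal.one_le_ofReal]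
        exact (lpnorm_fst_zero hp ha0 hb).mp hnorm
    · rintro ⟨hmem, hzE⟩
      obtain ⟨ha, hb, hab⟩ := mem_Econe.mp hzE
      rcases hmem with h | h
      · have h2 : (ENNReal.ofReal z.2)⁻¹ = 0 := h.2
        exact absurd (ENNReal.inv_eq_zero.mp h2) ENNReal.ofReal_ne_top
      · obtain ⟨h1, h2⟩ : (ENNReal.ofReal z.1)⁻¹ = ⊤ ∧ (ENNReal.ofReal z.2)⁻¹ ≤ 1 := h
        have ha0 : z.1 = 0 := by
          rw [ENNReal.inv_eq_top, ENNReal.ofReal_eq_zero] at h1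
          exact le_antisymm h1 ha
        have h1b : 1 ≤ z.2 := by
          rwa [ENNReal.inv_le_one, ENNReal.one_le_ofReal] at h2
        have hb0 : z.2 ≠ 0 := by intro h; rw [h] at h1b; linarith
        refine ⟨hzE, (lpnorm_fst_zero hp ha0 hb).mpr h1b, ?_, ?_⟩ <;>
          · unfold ang
            rw [if_neg hb0, ha0, zero_div, Real.arctan_zero]
  · have hθpos : 0 < θ := lt_of_le_of_ne hθ.1 (Ne.symm hθ0)
    set S := {z | z ∈ Econe ∧ 1 ≤ lpnorm p z ∧ ang z ∈ Icc 0 θ} with hS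
    set pre := iota ⁻¹' Cpset p θ ∩ Econe with hpre
    have hcond : ∀ z ∈ Econe, iota z ∈ Cpset p θ ↔
        ((ENNReal.ofReal z.2)⁻¹ ≤ ypE p ((ENNReal.ofReal z.1)⁻¹) ∧ ang z ≤ θ) := by
      intro z hzE
      by_cases hθh : θ = π / 2
      · simp only [Cpset, if_neg hθ0, if_pos hθh, mem_setOf_eq, iota]
        constructor
        · intro h
          exact ⟨h, by rw [hθh]; exact ang_le_pi_div_two⟩
        · intro h; exact h.1
      · have hθlt : θ < π / 2 := lt_of_le_of_ne hθ.2 hθh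
        simp only [Cpset, if_neg hθ0, if_neg hθh, mem_setOf_eq, iota, le_min_iff]
        rw [ang_iff hθpos hθlt hzE]
        tauto
    have sub1 : pre ⊆ S := by
      rintro z ⟨hzpre, hzE⟩
      obtain ⟨hy, hang⟩ := (hcond z hzE).mp hzpre
      exact ⟨hzE, norm_of_inv hp hzE hy, ang_nonneg hzE, hang⟩
    have sub2 : S ⊆ pre ∪ ({(1:ℝ)} ×ˢ Ico (0:ℝ) 1) := by
      rintro z ⟨hzE, hnorm, hang⟩
      by_cases hc : p = ⊤ ∧ z.1 = 1 ∧ z.2 < 1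
      · right
        exact ⟨hc.2.1, (mem_Econe.mp hzE).2.1, hc.2.2⟩
      · left
        refine ⟨(hcond z hzE).mpr ⟨?_, hang.2⟩, hzE⟩
        apply inv_of_norm hp hzE hnorm
        intro hp1 hz1
        by_contra hlt
        push_neg at hlt
        exact hc ⟨hp1, hz1, hlt⟩
    apply le_antisymm
    · calc μ S ≤ μ (pre ∪ ({(1:ℝ)} ×ˢ Ico (0:ℝ) 1)) := measure_mono sub2
        _ ≤ μ pre + μ ({(1:ℝ)} ×ˢ Ico (0:ℝ) 1) := measure_union_le _ _
        _ = μ pre + 0 := by rw [seg_null μ hbf hhom]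
        _ = μ pre := add_zero _
    · exact measure_mono sub1
end
end
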